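/- arXiv:1109.3296 — 5 statements merged into one kernel-verified Lean document; each statement's English description precedes it below -/
import Mathlib

section
/- Assume D := det Σ^{(f₁,…,f_k,g)}_{(f₁,…,f_k,g)} ≠ 0 (the Gram determinant of (f₁,…,f_k,g) is nonzero) and let h ∈ ℝ. Then a vector u ∈ V satisfies ⟪u, f_i⟫ = 0 for all i ∈ {1,…,k} and ⟪u, g⟫ = h if and only if the vector w := u − (h/D) · v₀ is orthogonal to each of f₁,…,f_k and to g; moreover (h/D) · v₀ lies in the span of {f₁,…,f_k,g}, so u = (h/D)·v₀ + w is the unique decomposition of such a solution into a component in Sp[f₁,…,f_k,g] and a component in its orthogonal complement. -/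
open scoped RealInnerProductSpace

/-- The matrix `Σ^{(a₁,…,a_r)}_{(b₁,…,b_s)}` whose `(p,q)` entry is `⟪b_q, a_p⟫`. -/
noncomputable def sigmaMat {V : Type*} [NormedAddCommGroup V] [InnerProductSpace ℝ V]
    {r s : ℕ} (a : Fin r → V) (b : Fin s → V) : Matrix (Fin r) (Fin s) ℝ :=
  Matrix.of fun p q => ⟪b q, a p⟫

/-- The standard control vector field built from the `k+1` vectors `f₀,…,f_k`
and the vector `g`. -/
noncomputable def v0 {V : Type*} [NormedAddCommGroup V] [InnerProductSpace ℝ V]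
    {k : ℕ} (f : Fin (k+1) → V) (g : V) : V :=
  (∑ i : Fin (k+1),
    ((-1 : ℝ) ^ ((i : ℕ) + k + 1) *
      (sigmaMat f (Fin.snoc (fun j => f (i.succAbove j)) g)).det) • f i)
  + (sigmaMat f f).det • g

lemma inner_v0 {V : Type*} [NormedAddCommGroup V] [InnerProductSpace ℝ V]
    {k : ℕ} (f : Fin (k+1) → V) (g x : V) :
    ⟪v0 f g, x⟫ = (sigmaMat (Fin.snoc f x) (Fin.snoc f g)).det := by
  rw [Matrix.det_succ_row _ (Fin.last (k+1)), Fin.sum_univ_castSucc]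
  rw [v0, inner_add_left, sum_inner, real_inner_smul_left]
  congr 1
  · refine Finset.sum_congr rfl fun i _ => ?_
    rw [real_inner_smul_left]
    have hminor : (sigmaMat (Fin.snoc f x) (Fin.snoc f g)).submatrix
        (Fin.last (k+1)).succAbove (Fin.castSucc i).succAbove
        = sigmaMat f (Fin.snoc (fun j => f (i.succAbove j)) g) := by
      ext p q
      simp only [Matrix.submatrix_apply, sigmaMat, Matrix.of_apply, Fin.succAbove_last_apply,
        Fin.snoc_castSucc]
      congr 1
      refine Fin.lastCases ?_ (fun q' => ?_) q
      · have : (Fin.castSucc i).succAbove (Fin.last k) = Fin.last (k+1) := by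
          rw [Fin.succAbove_castSucc_of_le _ _ (Fin.le_last i)]
          rfl
        rw [this, Fin.snoc_last, Fin.snoc_last]
      · rw [Fin.castSucc_succAbove_castSucc, Fin.snoc_castSucc, Fin.snoc_castSucc]
    rw [hminor]
    have hentry : (sigmaMat (Fin.snoc f x) (Fin.snoc f g)) (Fin.last (k+1)) (Fin.castSucc i)
        = ⟪f i, x⟫ := by
      simp [sigmaMat]
    rw [hentry]
    have hsign : ((-1 : ℝ)) ^ ((Fin.last (k+1) : ℕ) + (Fin.castSucc i : ℕ))
        = (-1 : ℝ) ^ ((i : ℕ) + k + 1) := by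
      simp only [Fin.val_last, Fin.coe_castSucc]
      congr 1
      omega
    rw [hsign]
    ring
  · have hminor : (sigmaMat (Fin.snoc f x) (Fin.snoc f g)).submatrix
        (Fin.last (k+1)).succAbove (Fin.last (k+1)).succAbove = sigmaMat f f := by
      ext p q
      simp [sigmaMat, Fin.succAbove_last_apply]
    have hentry : (sigmaMat (Fin.snoc f x) (Fin.snoc f g)) (Fin.last (k+1)) (Fin.last (k+1))
        = ⟪g, x⟫ := by simp [sigmaMat]
    rw [hminor, hentry]
    have : ((-1 : ℝ)) ^ ((Fin.last (k+1) : ℕ) + (Fin.last (k+1) : ℕ)) = 1 := by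
      rw [Fin.val_last, ← two_mul, pow_mul]; norm_num
    rw [this]
    ring

lemma inner_v0_f {V : Type*} [NormedAddCommGroup V] [InnerProductSpace ℝ V]
    {k : ℕ} (f : Fin (k+1) → V) (g : V) (j : Fin (k+1)) :
    ⟪v0 f g, f j⟫ = 0 := by
  rw [inner_v0]
  refine Matrix.det_zero_of_row_eq (i := Fin.castSucc j) (j := Fin.last (k+1))
    (Fin.ne_of_lt (Fin.castSucc_lt_last j)) ?_
  ext q
  simp [sigmaMat]

lemma inner_v0_g {V : Type*} [NormedAddCommGroup V] [InnerProductSpace ℝ V]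
    {k : ℕ} (f : Fin (k+1) → V) (g : V) :
    ⟪v0 f g, g⟫ = (sigmaMat (Fin.snoc f g) (Fin.snoc f g)).det := inner_v0 f g g

theorem stmt_1 {V : Type*} [NormedAddCommGroup V] [InnerProductSpace ℝ V]
    [FiniteDimensional ℝ V] (k : ℕ) (f : Fin (k+1) → V) (g : V)
    (D : ℝ) (hDdef : D = (sigmaMat (Fin.snoc f g) (Fin.snoc f g)).det) (hD : D ≠ 0)
    (h : ℝ) (u : V) :
    -- u is a solution iff w := u - (h/D) • v₀ is orthogonal to all f_i and to g
    (((∀ i : Fin (k+1), ⟪u, f i⟫ = 0) ∧ ⟪u, g⟫ = h) ↔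
      ((∀ i : Fin (k+1), ⟪u - (h / D) • v0 f g, f i⟫ = 0) ∧
        ⟪u - (h / D) • v0 f g, g⟫ = 0)) ∧
    -- (h/D) • v₀ lies in the span of {f₁,…,f_k,g}
    (h / D) • v0 f g ∈ Submodule.span ℝ (Set.range f ∪ {g}) ∧
    -- uniqueness of the decomposition of a solution into a component in the span
    -- and a component in its orthogonal complement
    (((∀ i : Fin (k+1), ⟪u, f i⟫ = 0) ∧ ⟪u, g⟫ = h) →
      ∀ a b : V, a ∈ Submodule.span ℝ (Set.range f ∪ {g}) →
        b ∈ (Submodule.span ℝ (Set.range f ∪ {g}))ᗮ → u = a + b →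
        a = (h / D) • v0 f g ∧ b = u - (h / D) • v0 f g) := by

  have hvg : ⟪v0 f g, g⟫ = D := by rw [inner_v0_g, hDdef]
  have hwf : ∀ i, ⟪u - (h/D) • v0 f g, f i⟫ = ⟪u, f i⟫ := fun i => by
    rw [inner_sub_left, real_inner_smul_left, inner_v0_f, mul_zero, sub_zero]
  have hwg : ⟪u - (h/D) • v0 f g, g⟫ = ⟪u, g⟫ - h := by
    rw [inner_sub_left, real_inner_smul_left, hvg, div_mul_cancel₀ _ hD]
  have hmem : (h / D) • v0 f g ∈ Submodule.span ℝ (Set.range f ∪ {g}) := by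
    apply Submodule.smul_mem
    rw [v0]
    refine Submodule.add_mem _
      (Submodule.sum_mem _ fun i _ => Submodule.smul_mem _ _
        (Submodule.subset_span (Or.inl ⟨i, rfl⟩)))
      (Submodule.smul_mem _ _ (Submodule.subset_span (Or.inr rfl)))
  refine ⟨⟨fun ⟨h1, h2⟩ => ⟨fun i => by rw [hwf, h1], by rw [hwg, h2, sub_self]⟩,
      fun ⟨h1, h2⟩ => ⟨fun i => by rw [← hwf i, h1], by rw [hwg] at h2; linarith⟩⟩,
    hmem, ?_⟩
  rintro ⟨h1, h2⟩ a b ha hb hab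
  have hw : u - (h/D) • v0 f g ∈ (Submodule.span ℝ (Set.range f ∪ {g}))ᗮ := by
    rw [Submodule.mem_orthogonal]
    intro v hv
    refine Submodule.span_induction (fun y hy => ?_) (by simp)
      (fun y z _ _ hy hz => by rw [inner_add_left, hy, hz, add_zero])
      (fun c y _ hy => by rw [real_inner_smul_left, hy, mul_zero]) hv
    rcases hy with ⟨i, rfl⟩ | rfl
    · rw [real_inner_comm, hwf, h1]
    · rw [real_inner_comm, hwg, h2, sub_self]
  have key : a - (h / D) • v0 f g = 0 := by
    have hS : a - (h / D) • v0 f g ∈ Submodule.span ℝ (Set.range f ∪ {g}) :=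
      Submodule.sub_mem _ ha hmem
    have hSo : a - (h / D) • v0 f g ∈ (Submodule.span ℝ (Set.range f ∪ {g}))ᗮ := by
      have : a - (h / D) • v0 f g = (u - (h / D) • v0 f g) - b := by
        rw [hab]; abel
      rw [this]
      exact Submodule.sub_mem _ hw hb
    have := (Submodule.mem_orthogonal _ _).1 hSo _ hS
    exact inner_self_eq_zero.1 this
  have haeq : a = (h / D) • v0 f g := sub_eq_zero.1 key
  refine ⟨haeq, ?_⟩
  rw [hab, haeq]
  abel
end

section
/- For every s ∈ {1,…,k} and every w ∈ V one has T(f_s, w) = 0; that is, each vector f_s lies in the kernel of the symmetric bilinear form T. -/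
open scoped RealInnerProductSpace

/-- The Gram matrix of `f₀,…,f_k`: the `(p,q)` entry is `⟪f_q, f_p⟫`. -/
noncomputable def gramMat {V : Type*} [NormedAddCommGroup V] [InnerProductSpace ℝ V]
    {k : ℕ} (f : Fin (k+1) → V) : Matrix (Fin (k+1)) (Fin (k+1)) ℝ :=
  Matrix.of fun p q => ⟪f q, f p⟫

/-- `M_{ij}`: the determinant of the matrix obtained from the Gram matrix of `f`
by deleting the `i`-th row and the `j`-th column. -/
noncomputable def gramMinor {V : Type*} [NormedAddCommGroup V] [InnerProductSpace ℝ V]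
    {k : ℕ} (f : Fin (k+1) → V) (i j : Fin (k+1)) : ℝ :=
  ((gramMat f).submatrix i.succAbove j.succAbove).det

/-- The symmetric bilinear form
`T(v,w) = Σ_{i,j} (−1)^{i+j+1} M_{ij} ⟪v, f_i⟫ ⟪w, f_j⟫ + (det Γ_f) ⟪v, w⟫`. -/
noncomputable def Tform {V : Type*} [NormedAddCommGroup V] [InnerProductSpace ℝ V]
    {k : ℕ} (f : Fin (k+1) → V) (v w : V) : ℝ :=
  (∑ i : Fin (k+1), ∑ j : Fin (k+1),
    (-1 : ℝ) ^ ((i : ℕ) + (j : ℕ) + 1) * gramMinor f i j * ⟪v, f i⟫ * ⟪w, f j⟫)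
  + (gramMat f).det * ⟪v, w⟫

theorem stmt_5 {V : Type*} [NormedAddCommGroup V] [InnerProductSpace ℝ V]
    [FiniteDimensional ℝ V] (k : ℕ) (f : Fin (k+1) → V) :
    ∀ s : Fin (k+1), ∀ w : V, Tform f (f s) w = 0 := by
  intro s w
  have hadj : ∀ i j : Fin (k+1),
      (-1 : ℝ) ^ ((i : ℕ) + (j : ℕ) + 1) * gramMinor f i j
        = -(gramMat f).adjugate j i := by
    intro i j
    rw [Matrix.adjugate_fin_succ_eq_det_submatrix, gramMinor, pow_succ]
    ring
  have hAs : ∀ i : Fin (k+1), ⟪f s, f i⟫ = gramMat f i s := fun i => rfl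
  have hprod : ∀ j : Fin (k+1),
      ∑ i : Fin (k+1), (gramMat f).adjugate j i * gramMat f i s
        = (gramMat f).det * (if j = s then 1 else 0) := by
    intro j
    have h := congrFun (congrFun (Matrix.adjugate_mul (gramMat f)) j) s
    simpa [Matrix.mul_apply, Matrix.one_apply] using h
  unfold Tform
  rw [Finset.sum_comm]
  have : ∀ j : Fin (k+1),
      ∑ i : Fin (k+1),
        (-1 : ℝ) ^ ((i : ℕ) + (j : ℕ) + 1) * gramMinor f i j * ⟪f s, f i⟫ * ⟪w, f j⟫
      = -((gramMat f).det * (if j = s then 1 else 0)) * ⟪w, f j⟫ := by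
    intro j
    rw [← hprod j, ← Finset.sum_neg_distrib, Finset.sum_mul]
    refine Finset.sum_congr rfl fun i _ => ?_
    rw [hadj i j, hAs i]; ring
  rw [Finset.sum_congr rfl fun j _ => this j]
  simp [Finset.sum_ite_eq', real_inner_comm (f s) w]
end

section
/- Assume f₁,…,f_k are linearly independent and let W := (Sp[f₁,…,f_k])ᗮ be the orthogonal complement of their span. Then: (a) T♯(f_s) = 0 for every s; (b) T♯(v) ∈ W for every v ∈ V; (c) T♯(w) = (det Γ_f) · w for every w ∈ W. In particular, since det Γ_f ≠ 0, the restriction of T♯ to W is a linear bijection of W onto itself, and its inverse is given by w ↦ (1/det Γ_f) · w. -/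
open scoped RealInnerProductSpace

/-- The map `T♯(v) = Σ_{i,j} (−1)^{i+j+1} M_{ij} ⟪v, f_i⟫ • f_j + (det Γ_f) • v`. -/
noncomputable def Tsharp {V : Type*} [NormedAddCommGroup V] [InnerProductSpace ℝ V]
    {k : ℕ} (f : Fin (k+1) → V) (v : V) : V :=
  (∑ i : Fin (k+1), ∑ j : Fin (k+1),
    ((-1 : ℝ) ^ ((i : ℕ) + (j : ℕ) + 1) * gramMinor f i j * ⟪v, f i⟫) • f j)
  + (gramMat f).det • v

lemma Tsharp_eq {V : Type*} [NormedAddCommGroup V] [InnerProductSpace ℝ V]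
    {k : ℕ} (f : Fin (k+1) → V) (v : V) :
    Tsharp f v = (gramMat f).det • v -
      ∑ j, (∑ i, (gramMat f).adjugate j i * ⟪v, f i⟫) • f j := by
  have hadj : ∀ i j : Fin (k+1),
      (-1 : ℝ) ^ ((i : ℕ) + (j : ℕ) + 1) * gramMinor f i j
        = -((gramMat f).adjugate j i) := by
    intro i j
    rw [Matrix.adjugate_fin_succ_eq_det_submatrix, gramMinor, pow_succ]
    ring
  have h1 : (∑ i : Fin (k+1), ∑ j : Fin (k+1),
      ((-1 : ℝ) ^ ((i : ℕ) + (j : ℕ) + 1) * gramMinor f i j * ⟪v, f i⟫) • f j)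
      = -∑ j, (∑ i, (gramMat f).adjugate j i * ⟪v, f i⟫) • f j := by
    rw [Finset.sum_comm, ← Finset.sum_neg_distrib]
    refine Finset.sum_congr rfl fun j _ => ?_
    rw [← neg_smul, ← Finset.sum_neg_distrib, Finset.sum_smul]
    refine Finset.sum_congr rfl fun i _ => ?_
    rw [hadj]
    ring_nf
  unfold Tsharp
  rw [h1, neg_add_eq_sub]

theorem stmt_8 {V : Type*} [NormedAddCommGroup V] [InnerProductSpace ℝ V]
    [FiniteDimensional ℝ V] (k : ℕ) (f : Fin (k+1) → V)
    (hf : LinearIndependent ℝ f) :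
    -- (a) T♯(f_s) = 0 for every s
    (∀ s : Fin (k+1), Tsharp f (f s) = 0) ∧
    -- (b) T♯(v) ∈ W for every v
    (∀ v : V, Tsharp f v ∈ (Submodule.span ℝ (Set.range f))ᗮ) ∧
    -- (c) T♯(w) = (det Γ_f) • w for every w ∈ W
    (∀ w ∈ (Submodule.span ℝ (Set.range f))ᗮ, Tsharp f w = (gramMat f).det • w) ∧
    -- det Γ_f ≠ 0
    (gramMat f).det ≠ 0 ∧
    -- the restriction of T♯ to W is a bijection of W onto itself
    Set.BijOn (Tsharp f) ((Submodule.span ℝ (Set.range f))ᗮ : Set V)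
      ((Submodule.span ℝ (Set.range f))ᗮ : Set V) ∧
    -- whose inverse is given by w ↦ (1/det Γ_f) • w
    (∀ w ∈ (Submodule.span ℝ (Set.range f))ᗮ,
      Tsharp f ((1 / (gramMat f).det) • w) = w ∧
      (1 / (gramMat f).det) • Tsharp f w = w) := by
  set Γ := gramMat f with hΓ
  have hΓapp : ∀ p q, Γ p q = ⟪f q, f p⟫ := fun p q => rfl
  have hΓsym : ∀ p q, Γ p q = Γ q p := fun p q => real_inner_comm _ _
  -- (a)
  have ha : ∀ s : Fin (k+1), Tsharp f (f s) = 0 := by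
    intro s
    rw [Tsharp_eq, ← hΓ]
    have h1 : ∀ j, (∑ i, Γ.adjugate j i * ⟪f s, f i⟫) = Γ.det * (1 : Matrix (Fin (k+1)) (Fin (k+1)) ℝ) j s := by
      intro j
      have h := congrFun (congrFun (Matrix.adjugate_mul Γ) j) s
      rw [Matrix.mul_apply] at h
      rw [Matrix.smul_apply, smul_eq_mul] at h
      rw [← h]
      exact Finset.sum_congr rfl fun i _ => by rw [hΓapp]
    simp_rw [h1]
    rw [Fintype.sum_eq_single s (fun j hj => by simp [Matrix.one_apply_ne hj])]
    simp [Matrix.one_apply]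
  -- key inner product computation
  have hb0 : ∀ (v : V) (s : Fin (k+1)), ⟪f s, Tsharp f v⟫ = 0 := by
    intro v s
    rw [Tsharp_eq, ← hΓ, inner_sub_right, inner_smul_right, inner_sum]
    simp_rw [real_inner_smul_right]
    have h1 : ∀ j, ⟪f s, f j⟫ = Γ s j := fun j => (hΓsym s j).symm ▸ rfl
    have h2 : (∑ j, (∑ i, Γ.adjugate j i * ⟪v, f i⟫) * ⟪f s, f j⟫)
        = ∑ i, (∑ j, Γ s j * Γ.adjugate j i) * ⟪v, f i⟫ := by
      calc (∑ j, (∑ i, Γ.adjugate j i * ⟪v, f i⟫) * ⟪f s, f j⟫)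
          = ∑ j, ∑ i, Γ s j * Γ.adjugate j i * ⟪v, f i⟫ := by
            refine Finset.sum_congr rfl fun j _ => ?_
            rw [Finset.sum_mul]
            refine Finset.sum_congr rfl fun i _ => ?_
            rw [hΓsym s j, hΓapp]
            ring
        _ = ∑ i, (∑ j, Γ s j * Γ.adjugate j i) * ⟪v, f i⟫ := by
            rw [Finset.sum_comm]
            exact Finset.sum_congr rfl fun i _ => (Finset.sum_mul _ _ _).symm
    rw [h2]
    have h3 : ∀ i, (∑ j, Γ s j * Γ.adjugate j i) = Γ.det * (1 : Matrix (Fin (k+1)) (Fin (k+1)) ℝ) s i := by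
      intro i
      have h := congrFun (congrFun (Matrix.mul_adjugate Γ) s) i
      rw [Matrix.mul_apply] at h
      rw [Matrix.smul_apply, smul_eq_mul] at h
      exact h
    simp_rw [h3]
    rw [Fintype.sum_eq_single s (fun i hi => by simp [Matrix.one_apply_ne (Ne.symm hi)])]
    simp [Matrix.one_apply, real_inner_comm (f s) v]
  -- (b)
  have hb : ∀ v : V, Tsharp f v ∈ (Submodule.span ℝ (Set.range f))ᗮ := by
    intro v
    rw [Submodule.mem_orthogonal]
    intro u hu
    induction hu using Submodule.span_induction with
    | mem x hx => obtain ⟨s, rfl⟩ := hx; exact hb0 v s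
    | zero => simp
    | add a b _ _ iha ihb => rw [inner_add_left, iha, ihb, add_zero]
    | smul c a _ iha => rw [inner_smul_left, iha, mul_zero]
  -- (c)
  have hc : ∀ w ∈ (Submodule.span ℝ (Set.range f))ᗮ, Tsharp f w = Γ.det • w := by
    intro w hw
    rw [Tsharp_eq, ← hΓ]
    have h0 : ∀ i, ⟪w, f i⟫ = 0 := fun i => by
      rw [real_inner_comm]
      exact hw (f i) (Submodule.subset_span ⟨i, rfl⟩)
    simp [h0]
  -- det ≠ 0
  have hdet : Γ.det ≠ 0 := by
    intro h
    obtain ⟨x, hx0, hx⟩ := Matrix.exists_mulVec_eq_zero_iff.2 h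
    have hu : (∑ i, x i • f i) = 0 := by
      have hinner : ⟪∑ i, x i • f i, ∑ i, x i • f i⟫ = 0 := by
        rw [sum_inner]
        refine Finset.sum_eq_zero fun p _ => ?_
        rw [real_inner_smul_left, inner_sum]
        simp_rw [real_inner_smul_right]
        have h4 : (∑ q, x q * ⟪f p, f q⟫) = Γ.mulVec x p := by
          simp only [Matrix.mulVec, dotProduct]
          refine Finset.sum_congr rfl fun q _ => ?_
          show x q * ⟪f p, f q⟫ = Γ p q * x q
          rw [hΓapp, real_inner_comm]
          ring
        rw [h4, hx]
        simp
      exact inner_self_eq_zero.mp hinner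
    have := (Fintype.linearIndependent_iff.mp hf) x hu
    exact hx0 (funext this)
  refine ⟨ha, hb, hc, hdet, ?_, ?_⟩
  · refine ⟨fun w _ => hb w, ?_, ?_⟩
    · intro a haW b hbW h
      rw [hc a haW, hc b hbW] at h
      exact smul_right_injective V hdet h
    · intro w hw
      have hmem : (1 / Γ.det) • w ∈ (Submodule.span ℝ (Set.range f))ᗮ :=
        Submodule.smul_mem _ _ hw
      refine ⟨(1 / Γ.det) • w, hmem, ?_⟩
      rw [hc _ hmem, smul_smul]
      rw [mul_one_div, div_self hdet, one_smul]
  · intro w hw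
    have hmem : (1 / Γ.det) • w ∈ (Submodule.span ℝ (Set.range f))ᗮ :=
      Submodule.smul_mem _ _ hw
    constructor
    · rw [hc _ hmem, smul_smul, mul_one_div, div_self hdet, one_smul]
    · rw [hc _ hw, smul_smul, one_div, inv_mul_cancel₀ hdet, one_smul]
end

section
/- Assume f₁,…,f_k are linearly independent. Then the map P is the orthogonal projection of V onto W := (Sp[f₁,…,f_k])ᗮ along Sp[f₁,…,f_k]; that is, P(u) = 0 for every u ∈ Sp[f₁,…,f_k], and P(w) = w for every w ∈ W. Consequently P coincides with the orthogonal projection operator of V onto the subspace W. -/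
open scoped RealInnerProductSpace

/-- The map `P`, given by the `(1/det Γ_f)`-scaled formal Laplace expansion along
the last row of the bordered Gram determinant whose last row consists of the
vectors `f₀,…,f_k,v` themselves. -/
noncomputable def Pmap {V : Type*} [NormedAddCommGroup V] [InnerProductSpace ℝ V]
    {k : ℕ} (f : Fin (k+1) → V) (v : V) : V :=
  (1 / (sigmaMat f f).det) •
    ((∑ i : Fin (k+1),
      ((-1 : ℝ) ^ ((i : ℕ) + k + 1) *
        (sigmaMat f (Fin.snoc (fun j => f (i.succAbove j)) v)).det) • f i)
    + (sigmaMat f f).det • v)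

section Aux

variable {V : Type*} [NormedAddCommGroup V] [InnerProductSpace ℝ V] {k : ℕ}

private lemma sigma_snoc_eq (f : Fin (k+1) → V) (i : Fin (k+1)) (v : V) :
    sigmaMat f (Fin.snoc (fun j => f (i.succAbove j)) v)
      = (sigmaMat f (Fin.snoc (fun j => f (i.succAbove j)) (0:V))).updateCol
          (Fin.last k) (fun p => ⟪v, f p⟫) := by
  ext p q
  induction q using Fin.lastCases with
  | last => simp [sigmaMat, Matrix.updateCol_apply]
  | cast j =>
      simp [sigmaMat, Matrix.updateCol_apply, (Fin.castSucc_lt_last j).ne]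

private lemma detM_add (f : Fin (k+1) → V) (i : Fin (k+1)) (u v : V) :
    (sigmaMat f (Fin.snoc (fun j => f (i.succAbove j)) (u + v))).det
      = (sigmaMat f (Fin.snoc (fun j => f (i.succAbove j)) u)).det
        + (sigmaMat f (Fin.snoc (fun j => f (i.succAbove j)) v)).det := by
  rw [sigma_snoc_eq f i (u + v), sigma_snoc_eq f i u, sigma_snoc_eq f i v]
  have h : (fun p => ⟪u + v, f p⟫) = (fun p => ⟪u, f p⟫) + fun p => ⟪v, f p⟫ := by
    funext p; simp [inner_add_left]
  rw [h, Matrix.det_updateCol_add]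

private lemma detM_smul (f : Fin (k+1) → V) (i : Fin (k+1)) (a : ℝ) (v : V) :
    (sigmaMat f (Fin.snoc (fun j => f (i.succAbove j)) (a • v))).det
      = a * (sigmaMat f (Fin.snoc (fun j => f (i.succAbove j)) v)).det := by
  rw [sigma_snoc_eq f i (a • v), sigma_snoc_eq f i v]
  have h : (fun p => ⟪a • v, f p⟫) = a • fun p => ⟪v, f p⟫ := by
    funext p; simp [real_inner_smul_left]
  rw [h, Matrix.det_updateCol_smul]

private lemma Pmap_add (f : Fin (k+1) → V) (u v : V) :
    Pmap f (u + v) = Pmap f u + Pmap f v := by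
  unfold Pmap
  rw [← smul_add]
  congr 1
  rw [show (∑ i : Fin (k+1),
      ((-1 : ℝ) ^ ((i : ℕ) + k + 1) *
        (sigmaMat f (Fin.snoc (fun j => f (i.succAbove j)) (u + v))).det) • f i)
    = ∑ i : Fin (k+1),
      ((((-1 : ℝ) ^ ((i : ℕ) + k + 1) *
        (sigmaMat f (Fin.snoc (fun j => f (i.succAbove j)) u)).det) • f i)
      + (((-1 : ℝ) ^ ((i : ℕ) + k + 1) *
        (sigmaMat f (Fin.snoc (fun j => f (i.succAbove j)) v)).det) • f i)) from
    Finset.sum_congr rfl fun i _ => by rw [detM_add, mul_add, add_smul]]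
  rw [Finset.sum_add_distrib, smul_add]
  abel

private lemma Pmap_smul (f : Fin (k+1) → V) (a : ℝ) (v : V) :
    Pmap f (a • v) = a • Pmap f v := by
  unfold Pmap
  rw [smul_comm a]
  congr 1
  rw [show (∑ i : Fin (k+1),
      ((-1 : ℝ) ^ ((i : ℕ) + k + 1) *
        (sigmaMat f (Fin.snoc (fun j => f (i.succAbove j)) (a • v))).det) • f i)
    = ∑ i : Fin (k+1),
      a • (((-1 : ℝ) ^ ((i : ℕ) + k + 1) *
        (sigmaMat f (Fin.snoc (fun j => f (i.succAbove j)) v)).det) • f i) from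
    Finset.sum_congr rfl fun i _ => by
      rw [detM_smul, smul_smul]; ring_nf]
  rw [← Finset.smul_sum, smul_add]
  congr 1
  rw [smul_comm]

private lemma Pmap_zero (f : Fin (k+1) → V) : Pmap f 0 = 0 := by
  have := Pmap_smul f 0 0
  simpa using this

private lemma gram_det_ne_zero (f : Fin (k+1) → V) (hf : LinearIndependent ℝ f) :
    (sigmaMat f f).det ≠ 0 := by
  intro h
  obtain ⟨g, hg, hg0⟩ := Matrix.exists_vecMul_eq_zero_iff.mpr h
  set x := ∑ p, g p • f p with hx
  have hfx : ∀ q, ⟪f q, x⟫ = 0 := by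
    intro q
    have h1 := congrFun hg0 q
    simp only [Matrix.vecMul, dotProduct, sigmaMat, Matrix.of_apply,
      Pi.zero_apply] at h1
    rw [hx, inner_sum]
    simpa [real_inner_smul_right] using h1
  have hxx : ⟪x, x⟫ = 0 := by
    rw [hx, sum_inner]
    simp only [real_inner_smul_left]
    rw [← hx]
    simp [hfx]
  have hx0 : x = 0 := inner_self_eq_zero.mp hxx
  exact hg (funext ((Fintype.linearIndependent_iff.mp hf) g hx0))

/-- The permutation sending `castSucc j ↦ i.succAbove j` and `last k ↦ i`. -/
private def sigmaPerm (i : Fin (k+1)) : Equiv.Perm (Fin (k+1)) :=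
  (Fin.revPerm.trans (Fin.cycleRange i.rev).symm).trans Fin.revPerm

private lemma sigmaPerm_apply (i : Fin (k+1)) (q : Fin (k+1)) :
    sigmaPerm i q = (Fin.snoc (fun j => i.succAbove j) i : Fin (k+1) → Fin (k+1)) q := by
  induction q using Fin.lastCases with
  | last => simp [sigmaPerm, Fin.rev_last]
  | cast j =>
      simp only [sigmaPerm, Equiv.trans_apply, Fin.revPerm_apply, Fin.rev_castSucc,
        Fin.cycleRange_symm_succ, Fin.snoc_castSucc]
      rw [Fin.succAbove_rev_left, Fin.rev_rev, Fin.rev_rev]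

private lemma sign_sigmaPerm (i : Fin (k+1)) :
    Equiv.Perm.sign (sigmaPerm i) = (-1) ^ (k - (i : ℕ)) := by
  have hrev : (i.rev : ℕ) = k - (i : ℕ) := by
    simp [Fin.val_rev]
  have h : sigmaPerm i
      = Fin.revPerm * ((Fin.cycleRange i.rev).symm * Fin.revPerm) := by
    ext q; rfl
  rw [h, map_mul, map_mul, Equiv.Perm.sign_symm, Fin.sign_cycleRange, hrev,
    mul_comm ((-1 : ℤˣ) ^ (k - (i : ℕ))), ← mul_assoc,
    Int.units_mul_self, one_mul]

private lemma detM_self (f : Fin (k+1) → V) (i : Fin (k+1)) :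
    (sigmaMat f (Fin.snoc (fun j => f (i.succAbove j)) (f i))).det
      = (-1 : ℝ) ^ (k - (i : ℕ)) * (sigmaMat f f).det := by
  have hM : sigmaMat f (Fin.snoc (fun j => f (i.succAbove j)) (f i))
      = (sigmaMat f f).submatrix id (sigmaPerm i) := by
    ext p q
    have hsnoc : (Fin.snoc (fun j => f (i.succAbove j)) (f i) : Fin (k+1) → V) q
        = f ((Fin.snoc (fun j => i.succAbove j) i : Fin (k+1) → Fin (k+1)) q) := by
      induction q using Fin.lastCases with
      | last => simp
      | cast j => simp
    simp [sigmaMat, Matrix.submatrix, hsnoc, sigmaPerm_apply]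
  rw [hM, Matrix.det_permute', sign_sigmaPerm]
  norm_num

private lemma detM_ne (f : Fin (k+1) → V) (i j : Fin (k+1)) (hij : j ≠ i) :
    (sigmaMat f (Fin.snoc (fun j' => f (i.succAbove j')) (f j))).det = 0 := by
  obtain ⟨q0, hq0⟩ := Fin.exists_succAbove_eq hij
  refine Matrix.det_zero_of_column_eq (Fin.castSucc_lt_last q0).ne ?_
  intro p
  simp [sigmaMat, hq0]

private lemma Pmap_apply_f (f : Fin (k+1) → V) (hf : LinearIndependent ℝ f)
    (j : Fin (k+1)) : Pmap f (f j) = 0 := by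
  have hd := gram_det_ne_zero f hf
  unfold Pmap
  have hsum : (∑ i : Fin (k+1),
      ((-1 : ℝ) ^ ((i : ℕ) + k + 1) *
        (sigmaMat f (Fin.snoc (fun j' => f (i.succAbove j')) (f j))).det) • f i)
      = (-(sigmaMat f f).det) • f j := by
    rw [Finset.sum_eq_single j]
    · rw [detM_self]
      congr 1
      rw [← mul_assoc, ← pow_add]
      have hjk : (j : ℕ) ≤ k := Fin.is_le j
      have h2 : (j : ℕ) + k + 1 + (k - (j : ℕ)) = 2 * k + 1 := by omega
      rw [h2]
      have : Odd (2 * k + 1) := ⟨k, by ring⟩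
      rw [this.neg_one_pow, neg_one_mul]
    · intro i _ hij
      rw [detM_ne f i j (Ne.symm hij), mul_zero, zero_smul]
    · intro h; exact absurd (Finset.mem_univ j) h
  rw [hsum, neg_smul, neg_add_cancel, smul_zero]

private lemma Pmap_perp (f : Fin (k+1) → V) (hf : LinearIndependent ℝ f)
    (w : V) (hw : ∀ p, ⟪w, f p⟫ = 0) : Pmap f w = w := by
  have hd := gram_det_ne_zero f hf
  unfold Pmap
  have h0 : ∀ i : Fin (k+1),
      (sigmaMat f (Fin.snoc (fun j => f (i.succAbove j)) w)).det = 0 := by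
    intro i
    refine Matrix.det_eq_zero_of_column_eq_zero (Fin.last k) ?_
    intro p
    simp [sigmaMat, hw]
  simp only [h0, mul_zero, zero_smul, Finset.sum_const_zero, zero_add]
  rw [smul_smul, one_div, inv_mul_cancel₀ hd, one_smul]

end Aux

theorem stmt_11 {V : Type*} [NormedAddCommGroup V] [InnerProductSpace ℝ V]
    [FiniteDimensional ℝ V] (k : ℕ) (f : Fin (k+1) → V)
    (hf : LinearIndependent ℝ f) :
    (∀ u ∈ Submodule.span ℝ (Set.range f), Pmap f u = 0) ∧
    (∀ w ∈ (Submodule.span ℝ (Set.range f))ᗮ, Pmap f w = w) ∧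
    (∀ v : V, Pmap f v =
      (Submodule.orthogonalProjectionOnto ((Submodule.span ℝ (Set.range f))ᗮ) v : V)) := by
  set S := Submodule.span ℝ (Set.range f) with hS
  have part1 : ∀ u ∈ S, Pmap f u = 0 := by
    intro u hu
    induction hu using Submodule.span_induction with
    | mem x hx =>
        obtain ⟨j, rfl⟩ := hx
        exact Pmap_apply_f f hf j
    | zero => exact Pmap_zero f
    | add a b _ _ ha hb => rw [Pmap_add, ha, hb, add_zero]
    | smul a x _ hx => rw [Pmap_smul, hx, smul_zero]
  have part2 : ∀ w ∈ Sᗮ, Pmap f w = w := by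
    intro w hw
    refine Pmap_perp f hf w fun p => ?_
    rw [real_inner_comm]
    exact hw (f p) (Submodule.subset_span ⟨p, rfl⟩)
  refine ⟨part1, part2, fun v => ?_⟩
  have hv : v ∈ S ⊔ Sᗮ := by
    rw [Submodule.sup_orthogonal_of_hasOrthogonalProjection]
    exact Submodule.mem_top
  obtain ⟨u, hu, w, hw, rfl⟩ := Submodule.mem_sup.mp hv
  rw [Pmap_add, part1 u hu, part2 w hw, zero_add, map_add,
    Submodule.orthogonalProjectionOnto_apply_of_mem_orthogonal (Submodule.le_orthogonal_orthogonal S hu)]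
  rw [Submodule.coe_add, ← Submodule.starProjection_apply, Submodule.starProjection_eq_self_iff.mpr hw]
  simp
end

section
/- Assume f₁,…,f_k are linearly independent. Then the standard control vector field is a scaled orthogonal projection of g onto the orthogonal complement of the span of the f_i: v₀ = (det Γ_f) · Π(g), where Π denotes the orthogonal projection of V onto (Sp[f₁,…,f_k])ᗮ. Equivalently, v₀ = (det Γ_f) · (g − Π'(g)) where Π' is the orthogonal projection onto Sp[f₁,…,f_k]. -/
open scoped RealInnerProductSpace

private lemma cyc_eq {k : ℕ} (j : Fin (k+1)) :
    (finSuccEquiv' j).trans (finSuccEquiv' (0 : Fin (k+1))).symm = Fin.cycleRange j := by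
  ext q
  refine Fin.succAboveCases j ?_ ?_ q
  · simp [Fin.cycleRange_self]
  · intro m
    simp [Fin.cycleRange_succAbove, Fin.succAbove_zero]

private def sigPerm {k : ℕ} (i : Fin (k+1)) : Equiv.Perm (Fin (k+1)) :=
  (finSuccEquiv' (Fin.last k)).trans (finSuccEquiv' i).symm

private lemma sigPerm_eq {k : ℕ} (i : Fin (k+1)) :
    sigPerm i = (Fin.cycleRange (Fin.last k)).trans (Fin.cycleRange i).symm := by
  rw [← cyc_eq, ← cyc_eq]
  ext q
  simp [sigPerm]

private lemma sign_sigPerm {k : ℕ} (i : Fin (k+1)) :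
    Equiv.Perm.sign (sigPerm i) = (-1 : ℤˣ) ^ ((i : ℕ) + k) := by
  rw [sigPerm_eq]
  have : (Fin.cycleRange (Fin.last k)).trans (Fin.cycleRange i).symm
      = (Fin.cycleRange i)⁻¹ * Fin.cycleRange (Fin.last k) := rfl
  rw [this, map_mul, map_inv, Fin.sign_cycleRange, Fin.sign_cycleRange]
  simp [pow_add, Fin.val_last]

theorem stmt_12 {V : Type*} [NormedAddCommGroup V] [InnerProductSpace ℝ V]
    [FiniteDimensional ℝ V] (k : ℕ) (f : Fin (k+1) → V) (g : V)
    (hf : LinearIndependent ℝ f) :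
    v0 f g =
      (sigmaMat f f).det •
        (Submodule.orthogonalProjection ((Submodule.span ℝ (Set.range f))ᗮ) g : V) ∧
    v0 f g =
      (sigmaMat f f).det •
        (g - (Submodule.orthogonalProjection (Submodule.span ℝ (Set.range f)) g : V)) := by
  set S := Submodule.span ℝ (Set.range f) with hS
  set P : V := (Submodule.orthogonalProjection S g : V) with hP
  obtain ⟨c, hc⟩ := (Submodule.mem_span_range_iff_exists_fun ℝ).mp (Submodule.orthogonalProjection S g).2
  set Γ := sigmaMat f f with hΓ
  set b := fun p => (⟪f p, g⟫ : ℝ) with hb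
  have hΓc : Γ.mulVec c = b := by
    funext p
    have hmem : g - P ∈ Sᗮ := Submodule.sub_starProjection_mem_orthogonal g
    have horth : ⟪f p, g - P⟫ = 0 :=
      Submodule.inner_right_of_mem_orthogonal
        (Submodule.subset_span (Set.mem_range_self p)) hmem
    have : ⟪f p, P⟫ = ⟪f p, g⟫ := by
      have := inner_sub_right (𝕜 := ℝ) (f p) g P
      rw [horth] at this
      linarith
    calc Γ.mulVec c p = ∑ q, ⟪f q, f p⟫ * c q := by
          simp [Matrix.mulVec, dotProduct, hΓ, sigmaMat]
      _ = ⟪f p, ∑ q, c q • f q⟫ := by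
          rw [inner_sum]
          congr 1; funext q
          rw [real_inner_smul_right, real_inner_comm]
          ring
      _ = ⟪f p, P⟫ := by rw [hc]
      _ = b p := this
  have hcramer : ∀ i, Γ.det * c i = (Γ.updateCol i b).det := by
    intro i
    have h1 : Matrix.cramer Γ b = Γ.det • c := by
      rw [← hΓc, Matrix.cramer_eq_adjugate_mulVec, Matrix.mulVec_mulVec,
        Matrix.adjugate_mul, Matrix.smul_mulVec, Matrix.one_mulVec]
    have := congrFun h1 i
    rw [Matrix.cramer_apply] at this
    simpa [mul_comm] using this.symm
  have hdet : ∀ i : Fin (k+1),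
      (sigmaMat f (Fin.snoc (fun j => f (i.succAbove j)) g)).det
        = (-1 : ℝ) ^ ((i : ℕ) + k) * (Γ.updateCol i b).det := by
    intro i
    have hmat : sigmaMat f (Fin.snoc (fun j => f (i.succAbove j)) g)
        = (Γ.updateCol i b).submatrix id (sigPerm i) := by
      funext p q
      refine Fin.lastCases ?_ ?_ q
      · have hσ : sigPerm i (Fin.last k) = i := by simp [sigPerm]
        simp [sigmaMat, Matrix.updateCol_apply, hσ, hb, real_inner_comm]
      · intro j
        have hσ : sigPerm i (Fin.castSucc j) = i.succAbove j := by
          simp [sigPerm, ← Fin.succAbove_last]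
        have hne : i.succAbove j ≠ i := Fin.succAbove_ne i j
        simp [sigmaMat, Matrix.updateCol_apply, hσ, hne, hΓ]
    rw [hmat, Matrix.det_permute', sign_sigPerm]
    push_cast
    ring_nf
  have hv0 : v0 f g = Γ.det • (g - P) := by
    rw [v0]
    have hsum : (∑ i : Fin (k+1),
        ((-1 : ℝ) ^ ((i : ℕ) + k + 1) *
          (sigmaMat f (Fin.snoc (fun j => f (i.succAbove j)) g)).det) • f i)
        = - (Γ.det • P) := by
      rw [hP, ← hc, Finset.smul_sum, ← Finset.sum_neg_distrib]
      congr 1; funext i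
      rw [hdet i, ← hcramer i, pow_succ]
      rw [smul_smul, ← neg_smul]
      congr 1
      have hx : (-1 : ℝ) ^ ((i : ℕ) + k) * (-1) ^ ((i : ℕ) + k) = 1 := by
        rw [← pow_add]
        exact Even.neg_one_pow ⟨(i : ℕ) + k, rfl⟩
      linear_combination (-(Γ.det * c i)) * hx
    rw [hsum]
    rw [smul_sub]
    abel
  have h2 : v0 f g = Γ.det • (g - P) := hv0
  refine ⟨?_, h2⟩
  rw [h2, hP]
  exact congrArg _ (Submodule.starProjection_orthogonal_val (K := S) g).symm
end
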